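/- arXiv:2312.13209 — 14 statements merged into one kernel-verified Lean document; each statement's English description precedes it below -/
import Mathlib

section
/- Let C be a pretriangulated category with shift Σ and let X₁ →f₁→ X₂ →f₂→ X₃ →f₃→ X₄ be a diagram in C. Then the fiber-cofiber Toda bracket is contained in the intersection of the iterated cofiber and iterated fiber Toda brackets: ⟨f₃,f₂,f₁⟩fc ⊆ ⟨f₃,f₂,f₁⟩cc ∩ ⟨f₃,f₂,f₁⟩ff. (This is the case n = 3 of the paper's Lemma 4.4; no hypothesis on the composites is needed, and the proof uses only the pretriangulated axioms.) -/
open CategoryTheory Category Limits Pretriangulated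

variable {C : Type*} [Category C] [Preadditive C] [HasZeroObject C]
  [HasShift C ℤ] [∀ n : ℤ, (CategoryTheory.shiftFunctor C n).Additive] [Pretriangulated C]

/-- The iterated cofiber Toda bracket of `h₁, h₂, h₃`. -/
def todaCC {A₁ A₂ A₃ A₄ : C} (h₁ : A₁ ⟶ A₂) (h₂ : A₂ ⟶ A₃) (h₃ : A₃ ⟶ A₄) :
    Set (A₁⟦(1:ℤ)⟧ ⟶ A₄) :=
  {ψ | ∃ (Y : C) (y : A₂ ⟶ Y) (y' : Y ⟶ A₁⟦(1:ℤ)⟧) (φ : Y ⟶ A₃),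
    (Triangle.mk h₁ y y' ∈ distTriang C) ∧ y ≫ φ = h₂ ∧ y' ≫ ψ = φ ≫ h₃}

/-- The iterated fiber Toda bracket of `h₁, h₂, h₃`. -/
def todaFF {A₁ A₂ A₃ A₄ : C} (h₁ : A₁ ⟶ A₂) (h₂ : A₂ ⟶ A₃) (h₃ : A₃ ⟶ A₄) :
    Set (A₁⟦(1:ℤ)⟧ ⟶ A₄) :=
  {ψ | ∃ (δ : A₁ ⟶ A₄⟦(-1:ℤ)⟧) (W : C) (w : A₄⟦(-1:ℤ)⟧ ⟶ W) (w' : W ⟶ A₃) (γ : A₂ ⟶ W),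
    ψ = δ⟦(1:ℤ)⟧' ≫ (shiftFunctorCompIsoId C (-1) 1 (by omega)).hom.app A₄ ∧
    (Triangle.mk w w' (h₃ ≫ (shiftFunctorCompIsoId C (-1) 1 (by omega)).inv.app A₄) ∈
      distTriang C) ∧
    δ ≫ w = h₁ ≫ γ ∧ γ ≫ w' = h₂}

/-- The fiber-cofiber Toda bracket of `h₁, h₂, h₃`. -/
def todaFC {A₁ A₂ A₃ A₄ : C} (h₁ : A₁ ⟶ A₂) (h₂ : A₂ ⟶ A₃) (h₃ : A₃ ⟶ A₄) :
    Set (A₁⟦(1:ℤ)⟧ ⟶ A₄) :=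
  {ψ | ∃ (Z : C) (z₁ : Z ⟶ A₂) (z₃ : A₃ ⟶ Z⟦(1:ℤ)⟧) (β₁ : A₁ ⟶ Z) (β₂ : Z⟦(1:ℤ)⟧ ⟶ A₄),
    (Triangle.mk z₁ h₂ z₃ ∈ distTriang C) ∧ β₁ ≫ z₁ = h₁ ∧ z₃ ≫ β₂ = h₃ ∧
    ψ = β₁⟦(1:ℤ)⟧' ≫ β₂}

/-- The fiber-cofiber Toda bracket is contained in the intersection of the iterated
cofiber and iterated fiber Toda brackets. -/
theorem todaFC_subset_todaCC_inter_todaFF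
    {X₁ X₂ X₃ X₄ : C} (f₁ : X₁ ⟶ X₂) (f₂ : X₂ ⟶ X₃) (f₃ : X₃ ⟶ X₄) :
    todaFC f₁ f₂ f₃ ⊆ todaCC f₁ f₂ f₃ ∩ todaFF f₁ f₂ f₃ := by
  rintro ψ ⟨Z, z₁, z₃, β₁, β₂, hT, hβ₁, hβ₂, hψ⟩
  constructor
  · -- cofiber part
    obtain ⟨Y, y, y', hY⟩ := distinguished_cocone_triangle f₁
    obtain ⟨φ, hφ₁, hφ₂⟩ := complete_distinguished_triangle_morphism
      (Triangle.mk f₁ y y') (Triangle.mk z₁ f₂ z₃) hY hT β₁ (𝟙 X₂)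
      (by exact (comp_id f₁).trans hβ₁.symm)
    refine ⟨Y, y, y', φ, hY, by exact hφ₁.trans (id_comp f₂), ?_⟩
    change y' ≫ β₁⟦(1:ℤ)⟧' = φ ≫ z₃ at hφ₂
    rw [hψ, ← assoc, hφ₂]
    exact (assoc φ z₃ β₂).trans (congrArg (fun g => φ ≫ g) hβ₂)
  · -- fiber part
    set e := shiftFunctorCompIsoId C (-1 : ℤ) 1 (by omega)
    set a : Z ⟶ X₄⟦(-1:ℤ)⟧ :=
      (shiftFunctorCompIsoId C (1 : ℤ) (-1) (by omega)).inv.app Z ≫ β₂⟦(-1:ℤ)⟧' with ha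
    have ha1 : a⟦(1:ℤ)⟧' = β₂ ≫ e.inv.app X₄ := by
      rw [ha, Functor.map_comp, shift_shiftFunctorCompIsoId_inv_app,
        shift_neg_shift']
      simp [e]
    obtain ⟨W, w, w', hW⟩ := distinguished_cocone_triangle₂ (f₃ ≫ e.inv.app X₄)
    obtain ⟨γ, hγ₁, hγ₂⟩ := complete_distinguished_triangle_morphism₂
      (Triangle.mk z₁ f₂ z₃) (Triangle.mk w w' (f₃ ≫ e.inv.app X₄)) hT hW a (𝟙 X₃)
      (by change z₃ ≫ a⟦(1:ℤ)⟧' = 𝟙 X₃ ≫ (f₃ ≫ e.inv.app X₄); rw [ha1, ← assoc, hβ₂, id_comp])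
    refine ⟨β₁ ≫ a, W, w, w', γ, ?_, hW, ?_, by exact hγ₂.symm.trans (comp_id f₂)⟩
    · rw [hψ, Functor.map_comp, assoc, ha1, assoc, e.inv_hom_id_app]
      simp
    · change z₁ ≫ γ = a ≫ w at hγ₁
      rw [assoc, ← hγ₁]
      exact (assoc β₁ z₁ γ).symm.trans (congrArg (fun g => g ≫ γ) hβ₁)
end

section
/- Let C be a pretriangulated category with shift Σ and let X₁ →f₁→ X₂ →f₂→ X₃ →f₃→ X₄ be a diagram in C with f₂ ∘ f₁ = 0 and f₃ ∘ f₂ = 0. Then the iterated cofiber Toda bracket ⟨f₃,f₂,f₁⟩cc is a coset of the indeterminacy subgroup G = f₃ ∘ Hom(ΣX₁, X₃) + Hom(ΣX₂, X₄) ∘ Σf₁ of the abelian group Hom(ΣX₁, X₄); that is, there exists ψ : ΣX₁ → X₄ with ⟨f₃,f₂,f₁⟩cc = ψ + G. (Part of the case n = 3 of the paper's Proposition 4.8; the proof uses only the pretriangulated axioms.) -/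
open CategoryTheory Category Limits Pretriangulated

variable {C : Type*} [Category C] [Preadditive C] [HasZeroObject C]
  [HasShift C ℤ] [∀ n : ℤ, (CategoryTheory.shiftFunctor C n).Additive] [Pretriangulated C]

/-- The todaCC Toda bracket is a coset of the indeterminacy subgroup
`f₃ ∘ Hom(ΣX₁, X₃) + Hom(ΣX₂, X₄) ∘ Σf₁`. -/
theorem todaCC_is_coset
    {X₁ X₂ X₃ X₄ : C} (f₁ : X₁ ⟶ X₂) (f₂ : X₂ ⟶ X₃) (f₃ : X₃ ⟶ X₄)
    (h₁ : f₁ ≫ f₂ = 0) (h₂ : f₂ ≫ f₃ = 0) :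
    ∃ ψ : X₁⟦(1:ℤ)⟧ ⟶ X₄,
      todaCC f₁ f₂ f₃ =
        {χ : X₁⟦(1:ℤ)⟧ ⟶ X₄ |
          ∃ (h : X₁⟦(1:ℤ)⟧ ⟶ X₃) (k : X₂⟦(1:ℤ)⟧ ⟶ X₄),
            χ = ψ + (h ≫ f₃ + f₁⟦(1:ℤ)⟧' ≫ k)} := by
  obtain ⟨Y, y, y', hT⟩ := Pretriangulated.distinguished_cocone_triangle f₁
  obtain ⟨φ, hφ⟩ : ∃ φ : Y ⟶ X₃, f₂ = y ≫ φ := Triangle.yoneda_exact₂ _ hT f₂ h₁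
  obtain ⟨ψ, hψ⟩ : ∃ ψ : X₁⟦(1:ℤ)⟧ ⟶ X₄, φ ≫ f₃ = y' ≫ ψ := Triangle.yoneda_exact₃ _ hT (φ ≫ f₃)
    (by show y ≫ φ ≫ f₃ = 0; rw [← assoc, ← hφ, h₂])
  refine ⟨ψ, ?_⟩
  ext χ
  simp only [todaCC, Set.mem_setOf_eq]
  constructor
  · rintro ⟨Y₂, y₂, y₂', φ₂, hT₂, hc₁, hc₂⟩
    set e := isoTriangleOfIso₁₂ _ _ hT hT₂ (Iso.refl X₁) (Iso.refl X₂) (by exact (comp_id f₁).trans (id_comp f₁).symm)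
      with hedef
    set c : Y ⟶ Y₂ := e.hom.hom₃ with hcdef
    have he₁ : e.hom.hom₁ = 𝟙 X₁ := by rw [hedef]; rfl
    have he₂ : e.hom.hom₂ = 𝟙 X₂ := by rw [hedef]; rfl
    have hc : y ≫ c = y₂ := by
      have := e.hom.comm₂; rw [he₂] at this; exact this.trans (id_comp _)
    have hc' : c ≫ y₂' = y' := by
      have := e.hom.comm₃; rw [he₁] at this
      exact this.symm.trans ((congrArg (fun g => y' ≫ g) ((shiftFunctor C (1:ℤ)).map_id X₁)).trans (comp_id y'))
    have hdiff : y ≫ (c ≫ φ₂ - φ) = 0 := by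
      rw [Preadditive.comp_sub, ← assoc, hc, hc₁, ← hφ, sub_self]
    obtain ⟨h, hh⟩ : ∃ h : X₁⟦(1:ℤ)⟧ ⟶ X₃, c ≫ φ₂ - φ = y' ≫ h :=
      Triangle.yoneda_exact₃ _ hT (c ≫ φ₂ - φ) hdiff
    change X₁⟦(1:ℤ)⟧ ⟶ X₃ at h
    have key : y' ≫ (χ - ψ - h ≫ f₃) = 0 := by
      have h1 : y' ≫ χ = (c ≫ φ₂) ≫ f₃ := by
        rw [← hc', assoc, hc₂, assoc]
      rw [Preadditive.comp_sub, Preadditive.comp_sub, h1, ← hψ, ← assoc, ← hh]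
      simp [Preadditive.sub_comp]
    obtain ⟨k, hk⟩ : ∃ k : X₂⟦(1:ℤ)⟧ ⟶ X₄, χ - ψ - h ≫ f₃ = (-f₁⟦(1:ℤ)⟧') ≫ k :=
      Triangle.yoneda_exact₃ _ (rot_of_distTriang _ hT)
      (χ - ψ - h ≫ f₃) key
    change X₂⟦(1:ℤ)⟧ ⟶ X₄ at k
    refine ⟨h, -k, ?_⟩
    rw [Preadditive.neg_comp] at hk
    rw [Preadditive.comp_neg, ← hk]
    abel
  · rintro ⟨h, k, rfl⟩
    refine ⟨Y, y, y', φ + y' ≫ h, hT, ?_, ?_⟩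
    · have hyy' : y ≫ y' = 0 := comp_distTriang_mor_zero₂₃ _ hT
      rw [Preadditive.comp_add, ← hφ, ← assoc, hyy', zero_comp, add_zero]
    · have hyf : y' ≫ f₁⟦(1:ℤ)⟧' = 0 := comp_distTriang_mor_zero₃₁ _ hT
      rw [Preadditive.comp_add, Preadditive.comp_add, ← hψ, Preadditive.add_comp,
        ← assoc, ← assoc, hyf, zero_comp, add_zero, assoc]
end

section
/- Let C be a pretriangulated category with shift Σ and let X₁ →f₁→ X₂ →f₂→ X₃ →f₃→ X₄ be a diagram in C with f₂ ∘ f₁ = 0 and f₃ ∘ f₂ = 0. Then the iterated fiber Toda bracket ⟨f₃,f₂,f₁⟩ff is a coset of the indeterminacy subgroup G = f₃ ∘ Hom(ΣX₁, X₃) + Hom(ΣX₂, X₄) ∘ Σf₁ of the abelian group Hom(ΣX₁, X₄); that is, there exists ψ : ΣX₁ → X₄ with ⟨f₃,f₂,f₁⟩ff = ψ + G. (Part of the case n = 3 of the paper's Proposition 4.8; the proof uses only the pretriangulated axioms.) -/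
open CategoryTheory Category Limits Pretriangulated

variable {C : Type*} [Category C] [Preadditive C] [HasZeroObject C]
  [HasShift C ℤ] [∀ n : ℤ, (CategoryTheory.shiftFunctor C n).Additive] [Pretriangulated C]

lemma myShiftHom (B : C) :
    (shiftFunctorCompIsoId C (1:ℤ) (-1) (by omega)).hom.app (B⟦(-1:ℤ)⟧) =
      ((shiftFunctorCompIsoId C (-1:ℤ) (1:ℤ) (by omega)).hom.app B)⟦(-1:ℤ)⟧' :=
  (shift_shiftFunctorCompIsoId_hom_app (-1) 1 (by omega) B).symm

def myUnshift {A B : C} (k : A⟦(1:ℤ)⟧ ⟶ B) : A ⟶ B⟦(-1:ℤ)⟧ :=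
  (shiftFunctorCompIsoId C (1:ℤ) (-1) (by omega)).inv.app A ≫ k⟦(-1:ℤ)⟧'

lemma myUnshift_spec {A B : C} (k : A⟦(1:ℤ)⟧ ⟶ B) :
    (myUnshift k)⟦(1:ℤ)⟧' ≫ (shiftFunctorCompIsoId C (-1:ℤ) 1 (by omega)).hom.app B = k := by
  dsimp [myUnshift]
  rw [Functor.map_comp, shift_shiftFunctorCompIsoId_inv_app, assoc]
  have := (shiftFunctorCompIsoId C (-1:ℤ) 1 (by omega)).hom.naturality k
  dsimp at this
  rw [this, Iso.inv_hom_id_app_assoc]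

lemma myInvRotMor {X₃ X₄ W : C} (f₃ : X₃ ⟶ X₄) (w : X₄⟦(-1:ℤ)⟧ ⟶ W) (w' : W ⟶ X₃) :
    (Triangle.mk w w'
      (f₃ ≫ (shiftFunctorCompIsoId C (-1:ℤ) 1 (by omega)).inv.app X₄)).invRotate.mor₁
      = -(f₃⟦(-1:ℤ)⟧') := by
  dsimp [Triangle.invRotate]
  change -((f₃ ≫ (shiftFunctorCompIsoId C (-1:ℤ) 1 (by omega)).inv.app X₄)⟦(-1:ℤ)⟧') ≫
    (shiftFunctorCompIsoId C (1:ℤ) (-1) (by omega)).hom.app (X₄⟦(-1:ℤ)⟧) = -(f₃⟦(-1:ℤ)⟧')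
  rw [myShiftHom, Functor.map_comp]
  simp only [Preadditive.neg_comp, assoc, ← Functor.map_comp, Iso.inv_hom_id_app,
    Functor.map_id, comp_id]
  simp

lemma myNat {A B : C} (g : A ⟶ B) :
    (g⟦(-1:ℤ)⟧')⟦(1:ℤ)⟧' ≫ (shiftFunctorCompIsoId C (-1:ℤ) 1 (by omega)).hom.app B =
      (shiftFunctorCompIsoId C (-1:ℤ) 1 (by omega)).hom.app A ≫ g := by
  have := (shiftFunctorCompIsoId C (-1:ℤ) 1 (by omega)).hom.naturality g
  dsimp at this
  rw [this]


/-- The todaFF Toda bracket is a coset of the indeterminacy subgroup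
`f₃ ∘ Hom(ΣX₁, X₃) + Hom(ΣX₂, X₄) ∘ Σf₁`. -/
theorem todaFF_is_coset
    {X₁ X₂ X₃ X₄ : C} (f₁ : X₁ ⟶ X₂) (f₂ : X₂ ⟶ X₃) (f₃ : X₃ ⟶ X₄)
    (h₁ : f₁ ≫ f₂ = 0) (h₂ : f₂ ≫ f₃ = 0) :
    ∃ ψ : X₁⟦(1:ℤ)⟧ ⟶ X₄,
      todaFF f₁ f₂ f₃ =
        {χ : X₁⟦(1:ℤ)⟧ ⟶ X₄ |
          ∃ (h : X₁⟦(1:ℤ)⟧ ⟶ X₃) (k : X₂⟦(1:ℤ)⟧ ⟶ X₄),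
            χ = ψ + (h ≫ f₃ + f₁⟦(1:ℤ)⟧' ≫ k)} := by
  obtain ⟨W, w, w', hT⟩ := distinguished_cocone_triangle₂
    (f₃ ≫ (shiftFunctorCompIsoId C (-1:ℤ) 1 (by omega)).inv.app X₄)
  obtain ⟨γ, hγ⟩ : ∃ γ : X₂ ⟶ W, f₂ = γ ≫ w' :=
    Triangle.coyoneda_exact₃ _ hT f₂ (by
      change f₂ ≫ f₃ ≫ (shiftFunctorCompIsoId C (-1:ℤ) 1 (by omega)).inv.app X₄ = 0
      rw [← assoc, h₂, zero_comp])
  obtain ⟨δ, hδ⟩ : ∃ δ : X₁ ⟶ X₄⟦(-1:ℤ)⟧, f₁ ≫ γ = δ ≫ w :=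
    Triangle.coyoneda_exact₂ _ hT (f₁ ≫ γ) (by change (f₁ ≫ γ) ≫ w' = 0; rw [assoc, ← hγ, h₁])
  have hww' : w ≫ w' = 0 := comp_distTriang_mor_zero₁₂ _ hT
  have hf₃w : f₃⟦(-1:ℤ)⟧' ≫ w = 0 := by
    have h0 := comp_distTriang_mor_zero₁₂ _ (inv_rot_of_distTriang _ hT)
    rw [myInvRotMor] at h0
    change (-(f₃⟦(-1:ℤ)⟧')) ≫ w = 0 at h0
    rw [Preadditive.neg_comp, neg_eq_zero] at h0
    exact h0
  refine ⟨δ⟦(1:ℤ)⟧' ≫ (shiftFunctorCompIsoId C (-1:ℤ) 1 (by omega)).hom.app X₄, ?_⟩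
  ext χ
  simp only [todaFF, Set.mem_setOf_eq]
  constructor
  · rintro ⟨δ', W₂, w₂, w₂', γ₂, rfl, hT₂, hc₁, hc₂⟩
    obtain ⟨b, hb₁, hb₂⟩ : ∃ b : W₂ ⟶ W, w₂ ≫ b = 𝟙 (X₄⟦(-1:ℤ)⟧) ≫ w ∧
        w₂' ≫ 𝟙 X₃ = b ≫ w' :=
      complete_distinguished_triangle_morphism₂ _ _ hT₂ hT (𝟙 _) (𝟙 _) (by
        change (f₃ ≫ (shiftFunctorCompIsoId C (-1:ℤ) 1 (by omega)).inv.app X₄) ≫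
          (𝟙 (X₄⟦(-1:ℤ)⟧))⟦(1:ℤ)⟧' =
          𝟙 X₃ ≫ f₃ ≫ (shiftFunctorCompIsoId C (-1:ℤ) 1 (by omega)).inv.app X₄
        exact (congrArg (fun g : (X₄⟦(-1:ℤ)⟧)⟦(1:ℤ)⟧ ⟶ (X₄⟦(-1:ℤ)⟧)⟦(1:ℤ)⟧ =>
          (f₃ ≫ (shiftFunctorCompIsoId C (-1:ℤ) 1 (by omega)).inv.app X₄) ≫ g)
          ((shiftFunctor C (1:ℤ)).map_id _)).trans ((comp_id _).trans (id_comp _).symm))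
    rw [id_comp] at hb₁
    rw [comp_id] at hb₂
    have hδ'w : δ' ≫ w = f₁ ≫ (γ₂ ≫ b) := by
      rw [← hb₁, ← assoc, hc₁, assoc]
    have hgw : ((γ₂ ≫ b) - γ) ≫ w' = 0 := by
      rw [Preadditive.sub_comp, assoc, ← hb₂, hc₂, ← hγ, sub_self]
    obtain ⟨k₀, hk₀⟩ : ∃ k₀ : X₂ ⟶ X₄⟦(-1:ℤ)⟧, (γ₂ ≫ b) - γ = k₀ ≫ w :=
      Triangle.coyoneda_exact₂ _ hT _ hgw
    have hd : ((δ' - δ) - f₁ ≫ k₀) ≫ w = 0 := by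
      rw [Preadditive.sub_comp, Preadditive.sub_comp, hδ'w, ← hδ, assoc, ← hk₀,
        Preadditive.comp_sub]
      abel
    obtain ⟨g', hg'⟩ : ∃ g' : X₁ ⟶ X₃⟦(-1:ℤ)⟧,
        (δ' - δ) - f₁ ≫ k₀ = g' ≫ (-(f₃⟦(-1:ℤ)⟧')) := by
      obtain ⟨g', hg'⟩ := Triangle.coyoneda_exact₂ _ (inv_rot_of_distTriang _ hT) _
        (by exact hd)
      rw [myInvRotMor] at hg'
      exact ⟨g', hg'⟩
    refine ⟨-(g'⟦(1:ℤ)⟧' ≫ (shiftFunctorCompIsoId C (-1:ℤ) 1 (by omega)).hom.app X₃),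
      k₀⟦(1:ℤ)⟧' ≫ (shiftFunctorCompIsoId C (-1:ℤ) 1 (by omega)).hom.app X₄, ?_⟩
    have hδ'eq : δ' = δ + (-(g' ≫ f₃⟦(-1:ℤ)⟧') + f₁ ≫ k₀) := by
      rw [Preadditive.comp_neg, sub_sub, sub_eq_iff_eq_add] at hg'
      rw [hg']
      abel
    rw [hδ'eq, Functor.map_add, Functor.map_add, Preadditive.add_comp, Preadditive.add_comp]
    congr 1
    congr 1
    · rw [Functor.map_neg, Preadditive.neg_comp, Functor.map_comp, assoc, myNat,
        Preadditive.neg_comp, assoc]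
    · rw [Functor.map_comp, assoc]
  · rintro ⟨h, k, rfl⟩
    have hεw : (myUnshift (h ≫ f₃)) ≫ w = 0 := by
      dsimp [myUnshift]
      rw [Functor.map_comp, assoc, assoc, hf₃w, comp_zero, comp_zero]
    refine ⟨δ + (myUnshift (h ≫ f₃) + f₁ ≫ myUnshift k), W, w, w', γ + myUnshift k ≫ w,
      ?_, hT, ?_, ?_⟩
    · rw [Functor.map_add, Functor.map_add, Preadditive.add_comp, Preadditive.add_comp,
        myUnshift_spec, Functor.map_comp, assoc, myUnshift_spec]
    · rw [Preadditive.add_comp, Preadditive.add_comp, hεw, ← hδ, Preadditive.comp_add,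
        assoc]
      abel
    · rw [Preadditive.add_comp, ← hγ, assoc, hww', comp_zero, add_zero]
end

section
/- Let C be a pretriangulated category with shift Σ and let X₁ →f₁→ X₂ →f₂→ X₃ →f₃→ X₄ be a diagram in C with f₂ ∘ f₁ = 0 and f₃ ∘ f₂ = 0. Then the fiber-cofiber Toda bracket ⟨f₃,f₂,f₁⟩fc is a coset of the indeterminacy subgroup G = f₃ ∘ Hom(ΣX₁, X₃) + Hom(ΣX₂, X₄) ∘ Σf₁ of the abelian group Hom(ΣX₁, X₄); that is, there exists ψ : ΣX₁ → X₄ with ⟨f₃,f₂,f₁⟩fc = ψ + G. (Part of the case n = 3 of the paper's Proposition 4.8; the proof uses only the pretriangulated axioms.) -/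
open CategoryTheory Category Limits Pretriangulated

variable {C : Type*} [Category C] [Preadditive C] [HasZeroObject C]
  [HasShift C ℤ] [∀ n : ℤ, (CategoryTheory.shiftFunctor C n).Additive] [Pretriangulated C]

/-- The todaFC Toda bracket is a coset of the indeterminacy subgroup
`f₃ ∘ Hom(ΣX₁, X₃) + Hom(ΣX₂, X₄) ∘ Σf₁`. -/
theorem todaFC_is_coset
    {X₁ X₂ X₃ X₄ : C} (f₁ : X₁ ⟶ X₂) (f₂ : X₂ ⟶ X₃) (f₃ : X₃ ⟶ X₄)
    (h₁ : f₁ ≫ f₂ = 0) (h₂ : f₂ ≫ f₃ = 0) :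
    ∃ ψ : X₁⟦(1:ℤ)⟧ ⟶ X₄,
      todaFC f₁ f₂ f₃ =
        {χ : X₁⟦(1:ℤ)⟧ ⟶ X₄ |
          ∃ (h : X₁⟦(1:ℤ)⟧ ⟶ X₃) (k : X₂⟦(1:ℤ)⟧ ⟶ X₄),
            χ = ψ + (h ≫ f₃ + f₁⟦(1:ℤ)⟧' ≫ k)} := by
  obtain ⟨Z, z₁, z₃, hT⟩ := distinguished_cocone_triangle₁ f₂
  obtain ⟨β₁, hβ₁⟩ : ∃ β₁ : X₁ ⟶ Z, f₁ = β₁ ≫ z₁ :=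
    (Triangle.mk z₁ f₂ z₃).coyoneda_exact₂ hT f₁ h₁
  obtain ⟨β₂, hβ₂⟩ : ∃ β₂ : Z⟦(1:ℤ)⟧ ⟶ X₄, f₃ = z₃ ≫ β₂ :=
    (Triangle.mk z₁ f₂ z₃).yoneda_exact₃ hT f₃ h₂
  refine ⟨β₁⟦(1:ℤ)⟧' ≫ β₂, Set.eq_of_subset_of_subset ?_ ?_⟩
  · rintro χ ⟨Z', z₁', z₃', β₁', β₂', hT', hb₁, hb₂, rfl⟩
    obtain ⟨a, ha₁, ha₂⟩ : ∃ a : Z' ⟶ Z, z₁' ≫ 𝟙 X₂ = a ≫ z₁ ∧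
        z₃' ≫ a⟦(1:ℤ)⟧' = 𝟙 X₃ ≫ z₃ :=
      complete_distinguished_triangle_morphism₁
        (Triangle.mk z₁' f₂ z₃') (Triangle.mk z₁ f₂ z₃) hT' hT (𝟙 X₂) (𝟙 X₃) ((comp_id _).trans (id_comp _).symm)
    rw [comp_id] at ha₁
    rw [id_comp] at ha₂
    have haIso : IsIso a :=
      Pretriangulated.isIso₁_of_isIso₂₃
        (T := Triangle.mk z₁' f₂ z₃') (T' := Triangle.mk z₁ f₂ z₃)
        { hom₁ := a, hom₂ := 𝟙 X₂, hom₃ := 𝟙 X₃,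
          comm₁ := (comp_id _).trans ha₁,
          comm₂ := (comp_id _).trans (id_comp _).symm,
          comm₃ := ha₂.trans (id_comp _).symm } hT' hT (IsIso.id X₂)
        (IsIso.id X₃)
    have haIso' : IsIso (a⟦(1:ℤ)⟧') := inferInstance
    set α : X₁ ⟶ Z := β₁' ≫ a with hα
    set v : Z⟦(1:ℤ)⟧ ⟶ X₄ := inv (a⟦(1:ℤ)⟧') ≫ β₂' with hv
    have hαz : α ≫ z₁ = f₁ := by rw [hα, assoc, ← ha₁, hb₁]
    have hzv : z₃ ≫ v = f₃ := by
      rw [hv, ← ha₂, assoc, IsIso.hom_inv_id_assoc, hb₂]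
    have hχ : β₁'⟦(1:ℤ)⟧' ≫ β₂' = α⟦(1:ℤ)⟧' ≫ v := by
      rw [hα, hv, Functor.map_comp, assoc, IsIso.hom_inv_id_assoc]
    obtain ⟨e, he⟩ : ∃ e : X₁⟦(1:ℤ)⟧ ⟶ X₃,
        α⟦(1:ℤ)⟧' - β₁⟦(1:ℤ)⟧' = e ≫ z₃ :=
      (Triangle.mk z₁ f₂ z₃).coyoneda_exact₁ hT (α⟦(1:ℤ)⟧' - β₁⟦(1:ℤ)⟧') (by
        show (α⟦(1:ℤ)⟧' - β₁⟦(1:ℤ)⟧') ≫ z₁⟦(1:ℤ)⟧' = 0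
        rw [Preadditive.sub_comp, ← Functor.map_comp, ← Functor.map_comp, hαz, ← hβ₁,
          sub_self])
    obtain ⟨k', hk'⟩ : ∃ k' : X₂⟦(1:ℤ)⟧ ⟶ X₄, v - β₂ = (-z₁⟦(1:ℤ)⟧') ≫ k' :=
      (Triangle.mk z₁ f₂ z₃).rotate.yoneda_exact₃
        (rot_of_distTriang _ hT) (v - β₂) (by
          show z₃ ≫ (v - β₂) = 0
          rw [Preadditive.comp_sub, hzv, ← hβ₂, sub_self])
    refine ⟨e, -k', ?_⟩
    have hα' : α⟦(1:ℤ)⟧' = β₁⟦(1:ℤ)⟧' + e ≫ z₃ := by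
      rw [← sub_eq_iff_eq_add']
      exact he
    have hv' : v = β₂ + (-z₁⟦(1:ℤ)⟧') ≫ k' := by
      rw [← sub_eq_iff_eq_add']
      exact hk'
    have hz₃z₁ : z₃ ≫ z₁⟦(1:ℤ)⟧' = 0 := comp_distTriang_mor_zero₃₁ _ hT
    rw [hχ, hα', hv']
    simp only [Preadditive.add_comp, Preadditive.comp_add, Preadditive.neg_comp,
      Preadditive.comp_neg]
    simp only [assoc]
    rw [reassoc_of% hz₃z₁, ← Functor.map_comp_assoc, ← hβ₁, ← hβ₂]
    simp only [zero_comp, comp_zero]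
    abel
  · rintro χ ⟨h, k, rfl⟩
    set β' : X₁ ⟶ Z := (shiftFunctor C (1:ℤ)).preimage (h ≫ z₃) with hβ'
    have hβ'₁ : β'⟦(1:ℤ)⟧' = h ≫ z₃ := (shiftFunctor C (1:ℤ)).map_preimage _
    have hz₃z₁ : z₃ ≫ z₁⟦(1:ℤ)⟧' = 0 := comp_distTriang_mor_zero₃₁ _ hT
    refine ⟨Z, z₁, z₃, β₁ + β', β₂ + z₁⟦(1:ℤ)⟧' ≫ k, hT, ?_, ?_, ?_⟩
    · have hb : β' ≫ z₁ = 0 := by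
        apply (shiftFunctor C (1:ℤ)).map_injective
        rw [Functor.map_comp, hβ'₁, assoc, hz₃z₁, comp_zero, Functor.map_zero]
      rw [Preadditive.add_comp, hb, add_zero, ← hβ₁]
    · rw [Preadditive.comp_add, reassoc_of% hz₃z₁, zero_comp, add_zero, ← hβ₂]
    · rw [Functor.map_add, hβ'₁]
      simp only [Preadditive.add_comp, Preadditive.comp_add]
      simp only [assoc]
      rw [reassoc_of% hz₃z₁, ← Functor.map_comp_assoc, ← hβ₁, ← hβ₂]
      simp only [zero_comp, comp_zero]
      abel
end

section
/- Let C be a pretriangulated category with shift Σ and let X₁ →f₁→ X₂ →f₂→ X₃ →f₃→ X₄ be a diagram in C with f₂ ∘ f₁ = 0 and f₃ ∘ f₂ = 0. Then the three Toda brackets coincide: ⟨f₃,f₂,f₁⟩ff = ⟨f₃,f₂,f₁⟩fc = ⟨f₃,f₂,f₁⟩cc as subsets of Hom(ΣX₁, X₄). (This is the case n = 3 of the paper's main Theorem 4.9; unlike earlier proofs, the paper's proof works in any pretriangulated category, without the octahedral axiom.) -/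
open CategoryTheory Category Limits Pretriangulated

variable {C : Type*} [Category C] [Preadditive C] [HasZeroObject C]
  [HasShift C ℤ] [∀ n : ℤ, (CategoryTheory.shiftFunctor C n).Additive] [Pretriangulated C]

lemma todaFC_subset_todaCC {X₁ X₂ X₃ X₄ : C} {f₁ : X₁ ⟶ X₂} {f₂ : X₂ ⟶ X₃} {f₃ : X₃ ⟶ X₄} :
    todaFC f₁ f₂ f₃ ⊆ todaCC f₁ f₂ f₃ := by
  rintro ψ ⟨Z, z₁, z₃, β₁, β₂, hT, hβ₁, hβ₂, hψ⟩
  obtain ⟨Y, y, y', hT₁⟩ := distinguished_cocone_triangle f₁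
  obtain ⟨φ, hφ₁, hφ₂⟩ := complete_distinguished_triangle_morphism
    (Triangle.mk f₁ y y') (Triangle.mk z₁ f₂ z₃) hT₁ hT β₁ (𝟙 _) ((comp_id f₁).trans hβ₁.symm)
  change Y ⟶ X₃ at φ
  replace hφ₁ : y ≫ φ = f₂ := hφ₁.trans (id_comp f₂)
  replace hφ₂ : y' ≫ β₁⟦(1:ℤ)⟧' = φ ≫ z₃ := hφ₂
  exact ⟨Y, y, y', φ, hT₁, by simpa using hφ₁, by
    rw [hψ, ← assoc, hφ₂, assoc, hβ₂]⟩

lemma todaCC_subset_todaFC {X₁ X₂ X₃ X₄ : C} {f₁ : X₁ ⟶ X₂} {f₂ : X₂ ⟶ X₃} {f₃ : X₃ ⟶ X₄}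
    (h₂ : f₂ ≫ f₃ = 0) : todaCC f₁ f₂ f₃ ⊆ todaFC f₁ f₂ f₃ := by
  rintro ψ ⟨Y, y, y', φ, hT₁, hφ, hφ'⟩
  obtain ⟨Z, z₁, z₃, hT₂⟩ := distinguished_cocone_triangle₁ f₂
  obtain ⟨β₁, hb₁, hb₂⟩ := complete_distinguished_triangle_morphism₁
    (Triangle.mk f₁ y y') (Triangle.mk z₁ f₂ z₃) hT₁ hT₂ (𝟙 _) φ (hφ.trans (id_comp f₂).symm)
  change X₁ ⟶ Z at β₁
  replace hb₁ : f₁ = β₁ ≫ z₁ := (comp_id f₁).symm.trans hb₁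
  replace hb₂ : y' ≫ β₁⟦(1:ℤ)⟧' = φ ≫ z₃ := hb₂
  obtain ⟨β₂', hβ₂'⟩ := Triangle.yoneda_exact₃ _ hT₂ f₃ h₂
  change Z⟦(1:ℤ)⟧ ⟶ X₄ at β₂'
  replace hβ₂' : f₃ = z₃ ≫ β₂' := hβ₂'
  obtain ⟨g, hg⟩ := Triangle.yoneda_exact₃ _ (rot_of_distTriang _ hT₁)
    (ψ - β₁⟦(1:ℤ)⟧' ≫ β₂') (by
      show y' ≫ (ψ - β₁⟦(1:ℤ)⟧' ≫ β₂') = 0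
      rw [Preadditive.comp_sub, hφ', ← assoc, hb₂, assoc, ← hβ₂', sub_self])
  change X₂⟦(1:ℤ)⟧ ⟶ X₄ at g
  replace hg : ψ - β₁⟦(1:ℤ)⟧' ≫ β₂' = (-f₁⟦(1:ℤ)⟧') ≫ g := hg
  have hβz : β₁ ≫ z₁ = f₁ := by simpa using hb₁.symm
  refine ⟨Z, z₁, z₃, β₁, β₂' - z₁⟦(1:ℤ)⟧' ≫ g, hT₂, hβz, ?_, ?_⟩
  · have hz : z₃ ≫ z₁⟦(1:ℤ)⟧' = 0 := comp_distTriang_mor_zero₃₁ _ hT₂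
    rw [Preadditive.comp_sub, ← hβ₂', ← assoc, hz, zero_comp, sub_zero]
  · rw [Preadditive.comp_sub, ← assoc, ← Functor.map_comp, hβz]
    rw [sub_eq_iff_eq_add'] at hg
    rw [hg, Preadditive.neg_comp]
    abel

lemma todaFC_subset_todaFF {X₁ X₂ X₃ X₄ : C} {f₁ : X₁ ⟶ X₂} {f₂ : X₂ ⟶ X₃} {f₃ : X₃ ⟶ X₄} :
    todaFC f₁ f₂ f₃ ⊆ todaFF f₁ f₂ f₃ := by
  rintro ψ ⟨Z, z₁, z₃, β₁, β₂, hT, hβ₁, hβ₂, hψ⟩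
  obtain ⟨Q, q, q', hQ⟩ := distinguished_cocone_triangle f₃
  set T := (Triangle.mk f₃ q q').invRotate.invRotate with hTdef
  have hT' : Triangle.mk T.mor₁ T.mor₂
      (f₃ ≫ (shiftFunctorCompIsoId C (-1) 1 (by omega)).inv.app X₄) ∈ distTriang C :=
    inv_rot_of_distTriang _ (inv_rot_of_distTriang _ hQ)
  have hα : ((shiftFunctor C (1:ℤ)).preimage
      (β₂ ≫ (shiftFunctorCompIsoId C (-1) 1 (by omega)).inv.app X₄))⟦(1:ℤ)⟧'
      = β₂ ≫ (shiftFunctorCompIsoId C (-1) 1 (by omega)).inv.app X₄ :=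
    Functor.map_preimage _ _
  set α : Z ⟶ X₄⟦(-1:ℤ)⟧ := (shiftFunctor C (1:ℤ)).preimage
      (β₂ ≫ (shiftFunctorCompIsoId C (-1) 1 (by omega)).inv.app X₄) with hαdef
  obtain ⟨γ, hγ₁, hγ₂⟩ := complete_distinguished_triangle_morphism₂
    (Triangle.mk z₁ f₂ z₃) (Triangle.mk T.mor₁ T.mor₂
      (f₃ ≫ (shiftFunctorCompIsoId C (-1) 1 (by omega)).inv.app X₄)) hT hT' α (𝟙 _)
    (by show z₃ ≫ α⟦(1:ℤ)⟧' = 𝟙 X₃ ≫ (f₃ ≫ (shiftFunctorCompIsoId C (-1) 1 (by omega)).inv.app X₄); rw [hα, ← assoc, hβ₂, id_comp])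
  change X₂ ⟶ T.obj₂ at γ
  replace hγ₁ : z₁ ≫ γ = α ≫ T.mor₁ := hγ₁
  replace hγ₂ : f₂ = γ ≫ T.mor₂ := (comp_id f₂).symm.trans hγ₂
  refine ⟨β₁ ≫ α, T.obj₂, T.mor₁, T.mor₂, γ, ?_, hT', ?_, hγ₂.symm⟩
  · show ψ = (β₁ ≫ α)⟦(1:ℤ)⟧' ≫ (shiftFunctorCompIsoId C (-1) 1 (by omega)).hom.app X₄
    rw [Functor.map_comp, assoc, hα, assoc, Iso.inv_hom_id_app]
    dsimp
    rw [comp_id, hψ]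
  · show (β₁ ≫ α) ≫ T.mor₁ = f₁ ≫ γ
    exact (assoc _ _ _).trans ((congrArg (β₁ ≫ ·) hγ₁.symm).trans ((assoc β₁ z₁ γ).symm.trans (congrArg (· ≫ γ) hβ₁)))

lemma todaFF_subset_todaFC {X₁ X₂ X₃ X₄ : C} {f₁ : X₁ ⟶ X₂} {f₂ : X₂ ⟶ X₃} {f₃ : X₃ ⟶ X₄}
    (h₁ : f₁ ≫ f₂ = 0) : todaFF f₁ f₂ f₃ ⊆ todaFC f₁ f₂ f₃ := by
  rintro ψ ⟨δ, W, w, w', γ, hψ0, hTW0, hδ, hγ⟩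
  have hTW : Triangle.mk w w'
      (f₃ ≫ (shiftFunctorCompIsoId C (-1) 1 (neg_add_cancel 1)).inv.app X₄) ∈ distTriang C :=
    hTW0
  have hψ : ψ = δ⟦(1:ℤ)⟧' ≫ (shiftFunctorCompIsoId C (-1) 1 (neg_add_cancel 1)).hom.app X₄ :=
    hψ0
  obtain ⟨Z, z₁, z₃, hT₂⟩ := distinguished_cocone_triangle₁ f₂
  obtain ⟨α, ha₁, ha₂0⟩ := complete_distinguished_triangle_morphism₁
    _ _ hT₂ hTW γ (𝟙 _) ((comp_id f₂).trans hγ.symm)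
  change Z ⟶ X₄⟦(-1:ℤ)⟧ at α
  replace ha₁ : z₁ ≫ γ = α ≫ w := ha₁
  replace ha₂0 : z₃ ≫ α⟦(1:ℤ)⟧' = f₃ ≫ (shiftFunctorCompIsoId C (-1) 1 (neg_add_cancel 1)).inv.app X₄ := ha₂0.trans (id_comp _)
  have ha₂ : z₃ ≫ α⟦(1:ℤ)⟧' =
      f₃ ≫ (shiftFunctorCompIsoId C (-1) 1 (neg_add_cancel 1)).inv.app X₄ := by
    simpa using ha₂0
  obtain ⟨β₁', hβ₁'⟩ := Triangle.coyoneda_exact₂ _ hT₂ f₁ h₁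
  change X₁ ⟶ Z at β₁'
  replace hβ₁' : f₁ = β₁' ≫ z₁ := hβ₁'
  obtain ⟨ε, hε⟩ := Triangle.coyoneda_exact₂ _ (inv_rot_of_distTriang _ hTW)
    (δ - β₁' ≫ α) (by
      show (δ - β₁' ≫ α) ≫ w = 0
      rw [Preadditive.sub_comp, hδ, assoc, ← ha₁, ← assoc, ← hβ₁', sub_self])
  change X₁ ⟶ X₃⟦(-1:ℤ)⟧ at ε
  replace hε : δ - β₁' ≫ α = ε ≫ (-(f₃ ≫ (shiftFunctorCompIsoId C (-1) 1 (neg_add_cancel 1)).inv.app X₄)⟦(-1:ℤ)⟧' ≫ (shiftFunctorCompIsoId C (1:ℤ) (-1) (add_neg_cancel 1)).hom.app (X₄⟦(-1:ℤ)⟧)) := hε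
  have key : -(f₃ ≫ (shiftFunctorCompIsoId C (-1) 1 (neg_add_cancel 1)).inv.app X₄)⟦(-1:ℤ)⟧' ≫ (shiftFunctorCompIsoId C (1:ℤ) (-1) (add_neg_cancel 1)).hom.app (X₄⟦(-1:ℤ)⟧)
      = (-z₃⟦(-1:ℤ)⟧' ≫ (shiftFunctorCompIsoId C (1:ℤ) (-1) (add_neg_cancel 1)).hom.app Z) ≫ α := by
    dsimp
    rw [Preadditive.neg_comp, assoc]
    congr 1
    have nat := (shiftFunctorCompIsoId C (1:ℤ) (-1) (add_neg_cancel 1)).hom.naturality α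
    dsimp at nat
    rw [← nat, ← Functor.map_comp_assoc, ha₂]
  have hδα : δ = (β₁' + (ε ≫ (-z₃⟦(-1:ℤ)⟧' ≫ (shiftFunctorCompIsoId C (1:ℤ) (-1) (add_neg_cancel 1)).hom.app Z) : X₁ ⟶ Z)) ≫ α := by
    rw [Preadditive.add_comp, assoc, ← key]
    exact sub_eq_iff_eq_add'.mp hε
  have hz : (-z₃⟦(-1:ℤ)⟧' ≫ (shiftFunctorCompIsoId C (1:ℤ) (-1) (add_neg_cancel 1)).hom.app Z) ≫ z₁ = 0 :=
    comp_distTriang_mor_zero₁₂ _ (inv_rot_of_distTriang _ hT₂)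
  refine ⟨Z, z₁, z₃, β₁' + (ε ≫ (-z₃⟦(-1:ℤ)⟧' ≫ (shiftFunctorCompIsoId C (1:ℤ) (-1) (add_neg_cancel 1)).hom.app Z) : X₁ ⟶ Z),
    α⟦(1:ℤ)⟧' ≫ (shiftFunctorCompIsoId C (-1) 1 (neg_add_cancel 1)).hom.app X₄,
    hT₂, ?_, ?_, ?_⟩
  · rw [Preadditive.add_comp, ← hβ₁', assoc, hz, comp_zero, add_zero]
  · rw [← assoc, ha₂, assoc, Iso.inv_hom_id_app]
    dsimp
    rw [comp_id]
  · rw [hψ, hδα, Functor.map_comp, assoc]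

/-- The three Toda brackets coincide when consecutive composites vanish. -/
theorem todaFF_eq_todaFC_eq_todaCC
    {X₁ X₂ X₃ X₄ : C} (f₁ : X₁ ⟶ X₂) (f₂ : X₂ ⟶ X₃) (f₃ : X₃ ⟶ X₄)
    (h₁ : f₁ ≫ f₂ = 0) (h₂ : f₂ ≫ f₃ = 0) :
    todaFF f₁ f₂ f₃ = todaFC f₁ f₂ f₃ ∧ todaFC f₁ f₂ f₃ = todaCC f₁ f₂ f₃ := by
  exact ⟨Set.Subset.antisymm (todaFF_subset_todaFC h₁) todaFC_subset_todaFF,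
    Set.Subset.antisymm todaFC_subset_todaCC (todaCC_subset_todaFC h₂)⟩
end

section
/- Let C be a pretriangulated category with shift Σ, let X₁ →f₁→ X₂ →f₂→ X₃ →f₃→ X₄ be a diagram in C, and let f₃' : X₃ → X₄ be another morphism, such that f₂ ∘ f₁ = 0, f₃ ∘ f₂ = 0 and f₃' ∘ f₂ = 0. Then ⟨f₃ + f₃', f₂, f₁⟩ ⊆ ⟨f₃, f₂, f₁⟩ + ⟨f₃', f₂, f₁⟩, where + on the right denotes the set of sums of one element from each bracket. (This is the case n = 3 of the paper's subadditivity Proposition 6.3(1); the proof uses only the pretriangulated axioms.) -/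
open CategoryTheory Category Limits Pretriangulated

variable {C : Type*} [Category C] [Preadditive C] [HasZeroObject C]
  [HasShift C ℤ] [∀ n : ℤ, (CategoryTheory.shiftFunctor C n).Additive] [Pretriangulated C]

/-- Subadditivity of the Toda bracket in the last variable. -/
theorem todaBracket_subadd_last
    {X₁ X₂ X₃ X₄ : C} (f₁ : X₁ ⟶ X₂) (f₂ : X₂ ⟶ X₃) (f₃ f₃' : X₃ ⟶ X₄)
    (h₁ : f₁ ≫ f₂ = 0) (h₂ : f₂ ≫ f₃ = 0) (h₂' : f₂ ≫ f₃' = 0) :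
    todaCC f₁ f₂ (f₃ + f₃') ⊆
      {ψ : X₁⟦(1:ℤ)⟧ ⟶ X₄ |
        ∃ a ∈ todaCC f₁ f₂ f₃, ∃ b ∈ todaCC f₁ f₂ f₃', ψ = a + b} := by
  rintro ψ ⟨Y, y, y', φ, hT, hφ, hψ⟩
  obtain ⟨a, ha⟩ : ∃ a : X₁⟦(1:ℤ)⟧ ⟶ X₄, φ ≫ f₃ = y' ≫ a :=
    Triangle.yoneda_exact₃ _ hT (φ ≫ f₃)
      (by show y ≫ φ ≫ f₃ = 0; rw [reassoc_of% hφ, h₂])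
  refine ⟨a, ⟨Y, y, y', φ, hT, hφ, ha.symm⟩, ψ - a, ⟨Y, y, y', φ, hT, hφ, ?_⟩, by abel⟩
  rw [Preadditive.comp_sub, ← ha, hψ, Preadditive.comp_add]
  abel
end

section
/- Let C be a pretriangulated category with shift Σ, let X₁ →f₁→ X₂ →f₂→ X₃ →f₃→ X₄ be a diagram in C, and let f₁' : X₁ → X₂ be another morphism, such that f₂ ∘ f₁ = 0, f₂ ∘ f₁' = 0 and f₃ ∘ f₂ = 0. Then ⟨f₃, f₂, f₁ + f₁'⟩ ⊆ ⟨f₃, f₂, f₁⟩ + ⟨f₃, f₂, f₁'⟩, where + on the right denotes the set of sums of one element from each bracket. (This is the case n = 3 of the paper's subadditivity Proposition 6.3(2); the proof uses only the pretriangulated axioms.) -/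
open CategoryTheory Category Limits Pretriangulated

variable {C : Type*} [Category C] [Preadditive C] [HasZeroObject C]
  [HasShift C ℤ] [∀ n : ℤ, (CategoryTheory.shiftFunctor C n).Additive] [Pretriangulated C]

/-- Fiber-cofiber data yields an element of the iterated cofiber Toda bracket. -/
lemma fcData_mem_todaCC {A₁ A₂ A₃ A₄ Z : C} {h₁ : A₁ ⟶ A₂} {h₂ : A₂ ⟶ A₃} {h₃ : A₃ ⟶ A₄}
    {z₁ : Z ⟶ A₂} {z₃ : A₃ ⟶ Z⟦(1:ℤ)⟧} (hTz : Triangle.mk z₁ h₂ z₃ ∈ distTriang C)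
    (β₁ : A₁ ⟶ Z) (β₂ : Z⟦(1:ℤ)⟧ ⟶ A₄) (hβ₁ : β₁ ≫ z₁ = h₁) (hβ₂ : z₃ ≫ β₂ = h₃) :
    β₁⟦(1:ℤ)⟧' ≫ β₂ ∈ todaCC h₁ h₂ h₃ := by
  obtain ⟨Y, y, y', hT⟩ := distinguished_cocone_triangle h₁
  obtain ⟨φ, hφ₁, hφ₂⟩ : ∃ φ : Y ⟶ A₃, y ≫ φ = 𝟙 A₂ ≫ h₂ ∧ y' ≫ β₁⟦(1:ℤ)⟧' = φ ≫ z₃ :=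
    complete_distinguished_triangle_morphism
    (Triangle.mk h₁ y y') (Triangle.mk z₁ h₂ z₃) hT hTz β₁ (𝟙 A₂) ((comp_id h₁).trans hβ₁.symm)
  change y ≫ φ = 𝟙 A₂ ≫ h₂ at hφ₁
  change y' ≫ β₁⟦(1:ℤ)⟧' = φ ≫ z₃ at hφ₂
  exact ⟨Y, y, y', φ, hT, by simpa using hφ₁, by rw [← assoc, hφ₂, assoc, hβ₂]⟩

/-- Subadditivity of the Toda bracket in the first variable. -/
theorem todaBracket_subadd_first
    {X₁ X₂ X₃ X₄ : C} (f₁ f₁' : X₁ ⟶ X₂) (f₂ : X₂ ⟶ X₃) (f₃ : X₃ ⟶ X₄)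
    (h₁ : f₁ ≫ f₂ = 0) (h₁' : f₁' ≫ f₂ = 0) (h₂ : f₂ ≫ f₃ = 0) :
    todaCC (f₁ + f₁') f₂ f₃ ⊆
      {ψ : X₁⟦(1:ℤ)⟧ ⟶ X₄ |
        ∃ a ∈ todaCC f₁ f₂ f₃, ∃ b ∈ todaCC f₁' f₂ f₃, ψ = a + b} := by
  rintro ψ ⟨Y, y, y', φ, hT, hyφ, hy'ψ⟩
  -- choose a fiber triangle of `f₂`
  obtain ⟨Z, z₁, z₃, hTz⟩ := distinguished_cocone_triangle₁ f₂
  -- by TR3 on rotations, get `c : X₁⟦1⟧ ⟶ Z⟦1⟧`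
  obtain ⟨c, hc₁, hc₂⟩ : ∃ c : X₁⟦(1:ℤ)⟧ ⟶ Z⟦(1:ℤ)⟧, y' ≫ c = φ ≫ z₃ ∧
      (-(f₁ + f₁')⟦(1:ℤ)⟧') ≫ (𝟙 X₂)⟦(1:ℤ)⟧' = c ≫ (-(z₁⟦(1:ℤ)⟧')) :=
    complete_distinguished_triangle_morphism
    (Triangle.mk (f₁ + f₁') y y').rotate (Triangle.mk z₁ f₂ z₃).rotate
    (rot_of_distTriang _ hT) (rot_of_distTriang _ hTz) (𝟙 X₂) φ (hyφ.trans (id_comp f₂).symm)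
  obtain ⟨c, hc₁, hc₂⟩ : ∃ c' : X₁⟦(1:ℤ)⟧ ⟶ Z⟦(1:ℤ)⟧, y' ≫ c' = φ ≫ z₃ ∧
      (f₁ + f₁')⟦(1:ℤ)⟧' = c' ≫ z₁⟦(1:ℤ)⟧' := by
    refine ⟨c, hc₁, ?_⟩
    have h := hc₂
    change (-(f₁ + f₁')⟦(1:ℤ)⟧') ≫ (𝟙 X₂)⟦(1:ℤ)⟧' = c ≫ (-(z₁⟦(1:ℤ)⟧')) at h
    rw [CategoryTheory.Functor.map_id, comp_id, Preadditive.comp_neg,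
      neg_inj] at h
    exact h
  -- split off a lift of `f₁`
  obtain ⟨βa, hβa⟩ : ∃ βa : X₁ ⟶ Z, f₁ = βa ≫ z₁ := Triangle.coyoneda_exact₂ _ hTz f₁ h₁
  set cb : X₁⟦(1:ℤ)⟧ ⟶ Z⟦(1:ℤ)⟧ := c - βa⟦(1:ℤ)⟧' with hcb
  set βb : X₁ ⟶ Z := (shiftFunctor C (1:ℤ)).preimage cb with hβb
  have hmapβb : βb⟦(1:ℤ)⟧' = cb := (shiftFunctor C (1:ℤ)).map_preimage cb
  have hβbz₁ : βb ≫ z₁ = f₁' := by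
    apply (shiftFunctor C (1:ℤ)).map_injective
    rw [Functor.map_comp, hmapβb, hcb, Preadditive.sub_comp, ← hc₂, ← Functor.map_comp,
      ← hβa, ← Functor.map_sub, add_sub_cancel_left]
  -- lift `f₃` along `z₃`
  obtain ⟨β₂₀, hβ₂₀⟩ : ∃ g : Z⟦(1:ℤ)⟧ ⟶ X₄, f₃ = z₃ ≫ g :=
    Triangle.yoneda_exact₃ _ hTz f₃ h₂
  -- correct the lift so that `ψ = c ≫ β₂`
  have hfac : y' ≫ (ψ - c ≫ β₂₀) = 0 := by
    rw [Preadditive.comp_sub, hy'ψ, ← assoc, hc₁, assoc, ← hβ₂₀, sub_self]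
  obtain ⟨ε, hε⟩ : ∃ g : X₂⟦(1:ℤ)⟧ ⟶ X₄,
      ψ - c ≫ β₂₀ = (-(f₁ + f₁')⟦(1:ℤ)⟧') ≫ g :=
    Triangle.yoneda_exact₃ _ (rot_of_distTriang _ hT) (ψ - c ≫ β₂₀) hfac
  set β₂ : Z⟦(1:ℤ)⟧ ⟶ X₄ := β₂₀ - z₁⟦(1:ℤ)⟧' ≫ ε with hβ₂def
  have hz : z₃ ≫ z₁⟦(1:ℤ)⟧' = 0 := comp_distTriang_mor_zero₃₁ _ hTz
  have hz₃β₂ : z₃ ≫ β₂ = f₃ := by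
    rw [hβ₂def, Preadditive.comp_sub, ← hβ₂₀, ← assoc, hz, zero_comp, sub_zero]
  have hψeq : ψ = c ≫ β₂ := by
    rw [sub_eq_iff_eq_add] at hε
    rw [hε, hβ₂def, Preadditive.comp_sub, Preadditive.neg_comp, hc₂, assoc]
    abel
  refine ⟨βa⟦(1:ℤ)⟧' ≫ β₂, fcData_mem_todaCC hTz βa β₂ hβa.symm hz₃β₂,
    βb⟦(1:ℤ)⟧' ≫ β₂, fcData_mem_todaCC hTz βb β₂ hβbz₁ hz₃β₂, ?_⟩
  rw [hψeq, hmapβb, hcb, Preadditive.sub_comp]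
  abel
end

section
/- Let C be a pretriangulated category with shift Σ, let X₁ →f₁→ X₂ →f₂→ X₃ →f₃→ X₄ be a diagram in C, and let f₂' : X₂ → X₃ be another morphism, such that f₂ ∘ f₁ = 0, f₂' ∘ f₁ = 0, f₃ ∘ f₂ = 0 and f₃ ∘ f₂' = 0. Then equality holds: ⟨f₃, f₂ + f₂', f₁⟩ = ⟨f₃, f₂, f₁⟩ + ⟨f₃, f₂', f₁⟩, where + on the right denotes the set of sums of one element from each bracket. (This is the case n = 3, i = 2, of the paper's subadditivity Proposition 6.3(3); the proof uses only the pretriangulated axioms.) -/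
open CategoryTheory Category Limits Pretriangulated

variable {C : Type*} [Category C] [Preadditive C] [HasZeroObject C]
  [HasShift C ℤ] [∀ n : ℤ, (CategoryTheory.shiftFunctor C n).Additive] [Pretriangulated C]

/-- Additivity of the Toda bracket in the middle variable. -/
theorem todaBracket_add_middle
    {X₁ X₂ X₃ X₄ : C} (f₁ : X₁ ⟶ X₂) (f₂ f₂' : X₂ ⟶ X₃) (f₃ : X₃ ⟶ X₄)
    (h₁ : f₁ ≫ f₂ = 0) (h₁' : f₁ ≫ f₂' = 0)
    (h₂ : f₂ ≫ f₃ = 0) (h₂' : f₂' ≫ f₃ = 0) :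
    todaCC f₁ (f₂ + f₂') f₃ =
      {ψ : X₁⟦(1:ℤ)⟧ ⟶ X₄ |
        ∃ a ∈ todaCC f₁ f₂ f₃, ∃ b ∈ todaCC f₁ f₂' f₃, ψ = a + b} := by
  ext ψ
  constructor
  · rintro ⟨Y, y, y', φ, hT, hφ, hψ⟩
    obtain ⟨φ₂, hφ₂⟩ : ∃ φ₂ : Y ⟶ X₃, f₂ = y ≫ φ₂ := Triangle.yoneda_exact₂ _ hT f₂ h₁
    obtain ⟨a, ha⟩ : ∃ a : X₁⟦(1:ℤ)⟧ ⟶ X₄, φ₂ ≫ f₃ = y' ≫ a :=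
      Triangle.yoneda_exact₃ _ hT (φ₂ ≫ f₃)
        (show y ≫ (φ₂ ≫ f₃) = 0 by rw [← assoc, ← hφ₂, h₂])
    refine ⟨a, ⟨Y, y, y', φ₂, hT, hφ₂.symm, ha.symm⟩,
      ψ - a, ⟨Y, y, y', φ - φ₂, hT, ?_, ?_⟩, by abel⟩
    · rw [Preadditive.comp_sub, ← hφ₂, hφ]; abel
    · rw [Preadditive.comp_sub, hψ, ← ha, Preadditive.sub_comp]
  · rintro ⟨a, ⟨Ya, ya, ya', φa, hTa, ha1, ha2⟩, b, ⟨Yb, yb, yb', φb, hTb, hb1, hb2⟩, rfl⟩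
    obtain ⟨c, hc1, hc2⟩ : ∃ c : Ya ⟶ Yb,
        ya ≫ c = 𝟙 X₂ ≫ yb ∧ ya' ≫ (𝟙 X₁)⟦(1:ℤ)⟧' = c ≫ yb' :=
      complete_distinguished_triangle_morphism _ _ hTa hTb (𝟙 X₁) (𝟙 X₂) (by exact (comp_id f₁).trans (id_comp f₁).symm)
    rw [CategoryTheory.Functor.map_id, comp_id] at hc2
    rw [id_comp] at hc1
    refine ⟨Ya, ya, ya', φa + c ≫ φb, hTa, ?_, ?_⟩
    · rw [Preadditive.comp_add, ha1, ← assoc, hc1, hb1]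
    · rw [Preadditive.comp_add, Preadditive.add_comp, ha2, assoc, ← hb2, ← assoc, hc2, assoc]
end

section
/- Let C be a pretriangulated category with shift Σ and let X₁ →f₁→ X₂ →f₂→ X₃ →f₃→ X₄ be a diagram in C. For each i ∈ {1,2,3}, negating the i-th morphism negates the iterated cofiber Toda bracket: ⟨f₃,f₂,-f₁⟩cc = -⟨f₃,f₂,f₁⟩cc, ⟨f₃,-f₂,f₁⟩cc = -⟨f₃,f₂,f₁⟩cc, and ⟨-f₃,f₂,f₁⟩cc = -⟨f₃,f₂,f₁⟩cc, where -S denotes the set of negatives of elements of S in the abelian group Hom(ΣX₁, X₄). No hypothesis on the composites f₂ ∘ f₁ or f₃ ∘ f₂ is required. (This is the case n = 3 of the paper's Proposition 6.3(4).) -/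
open CategoryTheory Category Limits Pretriangulated

variable {C : Type*} [Category C] [Preadditive C] [HasZeroObject C]
  [HasShift C ℤ] [∀ n : ℤ, (CategoryTheory.shiftFunctor C n).Additive] [Pretriangulated C]

private lemma neg_image_eq {X Y : C} (S : Set (X ⟶ Y)) :
    (fun ψ => -ψ) '' S = {ψ | -ψ ∈ S} := by
  ext ψ
  constructor
  · rintro ⟨x, hx, rfl⟩; simpa using hx
  · intro h; exact ⟨-ψ, h, by simp⟩

private lemma dist_neg₁₃ {A B Y : C} {a : A ⟶ B} {y : B ⟶ Y} {y' : Y ⟶ A⟦(1:ℤ)⟧}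
    (h : Triangle.mk a y y' ∈ distTriang C) :
    Triangle.mk (-a) y (-y') ∈ distTriang C := by
  refine isomorphic_distinguished _ h _ ?_
  refine Triangle.isoMk _ _ (show A ≅ A from ⟨-𝟙 A, -𝟙 A, by simp, by simp⟩) (Iso.refl B) (Iso.refl Y) ?_ ?_ ?_
  · change (-a) ≫ 𝟙 B = (-𝟙 A) ≫ a; simp
  · change y ≫ 𝟙 Y = 𝟙 B ≫ y; simp
  · change (-y') ≫ (shiftFunctor C (1:ℤ)).map (-𝟙 A) = 𝟙 Y ≫ y'; simp [Functor.map_neg]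

/-- Negating any of the three morphisms negates the iterated cofiber Toda bracket. -/
theorem todaCC_neg
    {X₁ X₂ X₃ X₄ : C} (f₁ : X₁ ⟶ X₂) (f₂ : X₂ ⟶ X₃) (f₃ : X₃ ⟶ X₄) :
    todaCC (-f₁) f₂ f₃ = (fun ψ => -ψ) '' todaCC f₁ f₂ f₃ ∧
    todaCC f₁ (-f₂) f₃ = (fun ψ => -ψ) '' todaCC f₁ f₂ f₃ ∧
    todaCC f₁ f₂ (-f₃) = (fun ψ => -ψ) '' todaCC f₁ f₂ f₃ := by
  refine ⟨?_, ?_, ?_⟩ <;> rw [neg_image_eq] <;> ext ψ <;>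
    simp only [todaCC, Set.mem_setOf_eq]
  · constructor
    · rintro ⟨Y, y, y', φ, hT, h₂, h₃⟩
      refine ⟨Y, y, -y', φ, by simpa using dist_neg₁₃ hT, h₂, ?_⟩
      simpa using h₃
    · rintro ⟨Y, y, y', φ, hT, h₂, h₃⟩
      refine ⟨Y, y, -y', φ, dist_neg₁₃ hT, h₂, ?_⟩
      simpa using h₃
  · constructor
    · rintro ⟨Y, y, y', φ, hT, h₂, h₃⟩
      refine ⟨Y, y, y', -φ, hT, ?_, ?_⟩
      · simp [h₂]
      · simp [h₃]
    · rintro ⟨Y, y, y', φ, hT, h₂, h₃⟩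
      refine ⟨Y, y, y', -φ, hT, ?_, ?_⟩
      · simp [h₂]
      · simpa using congrArg Neg.neg h₃
  · constructor
    · rintro ⟨Y, y, y', φ, hT, h₂, h₃⟩
      refine ⟨Y, y, y', φ, hT, h₂, ?_⟩
      simpa using congrArg Neg.neg h₃
    · rintro ⟨Y, y, y', φ, hT, h₂, h₃⟩
      refine ⟨Y, y, y', φ, hT, h₂, ?_⟩
      simpa using congrArg Neg.neg h₃
end

section
/- Let C be a pretriangulated category with shift Σ and let X₁ →f₁→ X₂ →f₂→ X₃ →f₃→ X₄ →f₄→ X₅ be a diagram in C. Then f₄ ∘ ⟨f₃,f₂,f₁⟩cc ⊆ ⟨f₄ ∘ f₃, f₂, f₁⟩cc, where f₄ ∘ S denotes the set of composites f₄ ∘ ψ for ψ ∈ S. The same inclusion holds for the iterated fiber and fiber-cofiber Toda brackets. No hypothesis on the composites is required. (This is the case n = 3 of the paper's Proposition 6.5(1).) -/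
open CategoryTheory Category Limits Pretriangulated

variable {C : Type*} [Category C] [Preadditive C] [HasZeroObject C]
  [HasShift C ℤ] [∀ n : ℤ, (CategoryTheory.shiftFunctor C n).Additive] [Pretriangulated C]

/-- Postcomposition maps a Toda bracket into the bracket with composed last morphism. -/
theorem todaBracket_postcomp
    {X₁ X₂ X₃ X₄ X₅ : C} (f₁ : X₁ ⟶ X₂) (f₂ : X₂ ⟶ X₃) (f₃ : X₃ ⟶ X₄) (f₄ : X₄ ⟶ X₅) :
    (fun ψ => ψ ≫ f₄) '' todaCC f₁ f₂ f₃ ⊆ todaCC f₁ f₂ (f₃ ≫ f₄) ∧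
    (fun ψ => ψ ≫ f₄) '' todaFF f₁ f₂ f₃ ⊆ todaFF f₁ f₂ (f₃ ≫ f₄) ∧
    (fun ψ => ψ ≫ f₄) '' todaFC f₁ f₂ f₃ ⊆ todaFC f₁ f₂ (f₃ ≫ f₄) := by
  refine ⟨?_, ?_, ?_⟩
  · rintro _ ⟨ψ, ⟨Y, y, y', φ, hT, h1, h2⟩, rfl⟩
    refine ⟨Y, y, y', φ, hT, h1, ?_⟩
    dsimp only
    rw [reassoc_of% h2]
  · rintro _ ⟨ψ, ⟨δ, W, w, w', γ, hψ, hT, h1, h2⟩, rfl⟩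
    obtain ⟨V, v, v', hT₂⟩ := distinguished_cocone_triangle₂
      ((f₃ ≫ f₄) ≫ (shiftFunctorCompIsoId C (-1) 1 (by omega)).inv.app X₅)
    obtain ⟨φ₂, hφ₁, hφ₂⟩ := complete_distinguished_triangle_morphism₂ _ _ hT hT₂
      (f₄⟦(-1:ℤ)⟧') (𝟙 X₃) (by
        change (f₃ ≫ (shiftFunctorCompIsoId C (-1) 1 (by omega)).inv.app X₄) ≫ f₄⟦(-1:ℤ)⟧'⟦(1:ℤ)⟧' =
          𝟙 X₃ ≫ (f₃ ≫ f₄) ≫ (shiftFunctorCompIsoId C (-1) 1 (by omega)).inv.app X₅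
        rw [id_comp, assoc, assoc]
        congr 1
        exact ((shiftFunctorCompIsoId C (-1) 1 (by omega)).inv.naturality f₄).symm)
    change W ⟶ V at φ₂
    change w ≫ φ₂ = f₄⟦(-1:ℤ)⟧' ≫ v at hφ₁
    change w' ≫ 𝟙 X₃ = φ₂ ≫ v' at hφ₂
    rw [comp_id] at hφ₂
    refine ⟨δ ≫ f₄⟦(-1:ℤ)⟧', V, v, v', γ ≫ φ₂, ?_, hT₂, ?_, ?_⟩
    · dsimp only
      rw [hψ, Functor.map_comp, assoc, assoc]
      congr 1
      exact ((shiftFunctorCompIsoId C (-1) 1 (by omega)).hom.naturality f₄).symm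
    · rw [assoc, ← hφ₁, ← reassoc_of% h1]
    · rw [assoc, ← hφ₂, h2]
  · rintro _ ⟨ψ, ⟨Z, z₁, z₃, β₁, β₂, hT, h1, h2, h3⟩, rfl⟩
    refine ⟨Z, z₁, z₃, β₁, β₂ ≫ f₄, hT, h1, by rw [reassoc_of% h2], ?_⟩
    dsimp only
    rw [h3, assoc]
end

section
/- Let C be a pretriangulated category with shift Σ and let X₁ →f₁→ X₂ →f₂→ X₃ →f₃→ X₄ →f₄→ X₅ be a diagram in C. Then ⟨f₄,f₃,f₂⟩cc ∘ Σf₁ ⊆ ⟨f₄, f₃, f₂ ∘ f₁⟩cc, where S ∘ Σf₁ denotes the set of composites ψ ∘ Σf₁ for ψ ∈ S ⊆ Hom(ΣX₂, X₅). The same inclusion holds for the iterated fiber and fiber-cofiber Toda brackets. No hypothesis on the composites is required. (This is the case n = 3 of the paper's Proposition 6.5(2).) -/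
open CategoryTheory Category Limits Pretriangulated

variable {C : Type*} [Category C] [Preadditive C] [HasZeroObject C]
  [HasShift C ℤ] [∀ n : ℤ, (CategoryTheory.shiftFunctor C n).Additive] [Pretriangulated C]

/-- Precomposition with a suspension maps a Toda bracket into the bracket with composed
first morphism. -/
theorem todaBracket_precomp
    {X₁ X₂ X₃ X₄ X₅ : C} (f₁ : X₁ ⟶ X₂) (f₂ : X₂ ⟶ X₃) (f₃ : X₃ ⟶ X₄) (f₄ : X₄ ⟶ X₅) :
    (fun ψ => f₁⟦(1:ℤ)⟧' ≫ ψ) '' todaCC f₂ f₃ f₄ ⊆ todaCC (f₁ ≫ f₂) f₃ f₄ ∧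
    (fun ψ => f₁⟦(1:ℤ)⟧' ≫ ψ) '' todaFF f₂ f₃ f₄ ⊆ todaFF (f₁ ≫ f₂) f₃ f₄ ∧
    (fun ψ => f₁⟦(1:ℤ)⟧' ≫ ψ) '' todaFC f₂ f₃ f₄ ⊆ todaFC (f₁ ≫ f₂) f₃ f₄ := by
  refine ⟨?_, ?_, ?_⟩
  · rintro _ ⟨ψ, ⟨Y, y, y', φ, hT, h₂, h₃⟩, rfl⟩
    obtain ⟨Y2, g, g', hT'⟩ := distinguished_cocone_triangle (f₁ ≫ f₂)
    obtain ⟨c, hc₁, hc₂⟩ := complete_distinguished_triangle_morphism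
      (Triangle.mk (f₁ ≫ f₂) g g') (Triangle.mk f₂ y y') hT' hT f₁ (𝟙 _) (by exact comp_id (f₁ ≫ f₂))
    change Y2 ⟶ Y at c
    refine ⟨Y2, g, g', c ≫ φ, hT', ?_, ?_⟩
    · simp only [Triangle.mk_mor₂, Triangle.mk_obj₂, id_comp] at hc₁
      rw [← assoc, (show g ≫ c = y from hc₁.trans (id_comp y)), h₂]
    · simp only [Triangle.mk_mor₃] at hc₂
      rw [assoc, ← assoc g', (show g' ≫ f₁⟦(1:ℤ)⟧' = c ≫ y' from hc₂), assoc, h₃]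
  · rintro _ ⟨ψ, ⟨δ, W, w, w', γ, hψ, hT, h₁, h₂⟩, rfl⟩
    exact ⟨f₁ ≫ δ, W, w, w', γ, by simp [hψ], hT, by simp [assoc, h₁], h₂⟩
  · rintro _ ⟨ψ, ⟨Z, z₁, z₃, β₁, β₂, hT, h₁, h₃, hψ⟩, rfl⟩
    exact ⟨Z, z₁, z₃, f₁ ≫ β₁, β₂, hT, by simp [assoc, h₁], h₃, by simp [hψ]⟩
end

section
/- Let C be a pretriangulated category with shift Σ and let X₁ →f₁→ X₂ →f₂→ X₃ →f₃→ X₄ →f₄→ X₅ be a diagram in C. Then the composition can be shifted across the bracket: ⟨f₄, f₃, f₂ ∘ f₁⟩cc ⊆ ⟨f₄, f₃ ∘ f₂, f₁⟩cc, and dually ⟨f₄ ∘ f₃, f₂, f₁⟩ff ⊆ ⟨f₄, f₃ ∘ f₂, f₁⟩ff. No hypothesis on the composites is required. (This is the case n = 3 of the paper's Proposition 6.5(3) and (3').) -/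
open CategoryTheory Category Limits Pretriangulated

variable {C : Type*} [Category C] [Preadditive C] [HasZeroObject C]
  [HasShift C ℤ] [∀ n : ℤ, (CategoryTheory.shiftFunctor C n).Additive] [Pretriangulated C]

/-- Shifting a composition across the bracket. -/
theorem todaBracket_shift_comp
    {X₁ X₂ X₃ X₄ X₅ : C} (f₁ : X₁ ⟶ X₂) (f₂ : X₂ ⟶ X₃) (f₃ : X₃ ⟶ X₄) (f₄ : X₄ ⟶ X₅) :
    todaCC (f₁ ≫ f₂) f₃ f₄ ⊆ todaCC f₁ (f₂ ≫ f₃) f₄ ∧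
    todaFF f₁ f₂ (f₃ ≫ f₄) ⊆ todaFF f₁ (f₂ ≫ f₃) f₄ := by
  constructor
  · rintro ψ ⟨Y, y, y', φ, hT, hy, hy'⟩
    obtain ⟨Y₂, u, v, hT₂⟩ := distinguished_cocone_triangle f₁
    obtain ⟨θ, hθ₁, hθ₂⟩ := complete_distinguished_triangle_morphism
      (Triangle.mk f₁ u v) (Triangle.mk (f₁ ≫ f₂) y y') hT₂ hT (𝟙 _) f₂ (by dsimp only [Triangle.mk]; simp)
    dsimp only [Triangle.mk] at θ hθ₁ hθ₂
    rw [CategoryTheory.Functor.map_id, comp_id] at hθ₂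
    exact ⟨Y₂, u, v, θ ≫ φ, hT₂, by rw [← assoc, hθ₁, assoc, hy],
      by rw [hθ₂, assoc, hy', ← assoc]⟩
  · rintro ψ ⟨δ, W, w, w', γ, hψ, hT, hδ, hγ⟩
    obtain ⟨W₂, w₂, w₂', hT₂⟩ := distinguished_cocone_triangle₂
      (f₄ ≫ (shiftFunctorCompIsoId C (-1) 1 (by omega)).inv.app X₅)
    obtain ⟨θ, hθ₁, hθ₂⟩ := complete_distinguished_triangle_morphism₂
      (Triangle.mk w w' ((f₃ ≫ f₄) ≫ (shiftFunctorCompIsoId C (-1) 1 (by omega)).inv.app X₅))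
      (Triangle.mk w₂ w₂' (f₄ ≫ (shiftFunctorCompIsoId C (-1) 1 (by omega)).inv.app X₅))
      hT hT₂ (𝟙 _) f₃ (by dsimp only [Triangle.mk]; simp)
    dsimp only [Triangle.mk] at θ hθ₁ hθ₂
    rw [id_comp] at hθ₁
    exact ⟨δ, W₂, w₂, w₂', γ ≫ θ, hψ, hT₂, by rw [← hθ₁, ← assoc, hδ, assoc],
      by rw [assoc, ← hθ₂, ← assoc, hγ]⟩
end

section
/- Let C be a pretriangulated category with shift Σ and let X₁ →f₁→ X₂ →f₂→ X₃ →f₃→ X₄ →f₄→ X₅ be a diagram in C with f₂ ∘ f₁ = 0, f₃ ∘ f₂ = 0 and f₄ ∘ f₃ = 0. Then f₄ ∘ ⟨f₃,f₂,f₁⟩ = ⟨f₄,f₃,f₂⟩ ∘ (-Σf₁), i.e. the set of composites f₄ ∘ ψ for ψ ∈ ⟨f₃,f₂,f₁⟩ equals the set of composites -(ψ' ∘ Σf₁) for ψ' ∈ ⟨f₄,f₃,f₂⟩, as subsets of Hom(ΣX₁, X₅). (This is the case n = 3 of the paper's Proposition 6.6(6), where the sign is (-1)ⁿ = -1; the proof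 uses only the pretriangulated axioms.) -/
open CategoryTheory Category Limits Pretriangulated

variable {C : Type*} [Category C] [Preadditive C] [HasZeroObject C]
  [HasShift C ℤ] [∀ n : ℤ, (CategoryTheory.shiftFunctor C n).Additive] [Pretriangulated C]

/-- Juggling formula: `f₄ ∘ ⟨f₃,f₂,f₁⟩ = ⟨f₄,f₃,f₂⟩ ∘ (-Σf₁)`. -/
theorem todaBracket_juggle
    {X₁ X₂ X₃ X₄ X₅ : C} (f₁ : X₁ ⟶ X₂) (f₂ : X₂ ⟶ X₃) (f₃ : X₃ ⟶ X₄) (f₄ : X₄ ⟶ X₅)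
    (h₁ : f₁ ≫ f₂ = 0) (h₂ : f₂ ≫ f₃ = 0) (h₃ : f₃ ≫ f₄ = 0) :
    {χ : X₁⟦(1:ℤ)⟧ ⟶ X₅ | ∃ ψ ∈ todaCC f₁ f₂ f₃, χ = ψ ≫ f₄} =
    {χ : X₁⟦(1:ℤ)⟧ ⟶ X₅ | ∃ ψ' ∈ todaCC f₂ f₃ f₄, χ = -(f₁⟦(1:ℤ)⟧' ≫ ψ')} := by
  ext χ
  simp only [Set.mem_setOf_eq]
  constructor
  · rintro ⟨ψ, ⟨Y, y, y', φ, hT, hyφ, hy'ψ⟩, rfl⟩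
    obtain ⟨Z, z, z', hT2⟩ := distinguished_cocone_triangle f₂
    have hrot := rot_of_distTriang _ hT
    obtain ⟨θ, hθ₁', hθ₂'⟩ :
        ∃ θ : X₁⟦(1:ℤ)⟧ ⟶ Z, y' ≫ θ = φ ≫ z ∧ θ ≫ z' = -(f₁⟦(1:ℤ)⟧') := by
      obtain ⟨θ₀, hθ₁, hθ₂⟩ := complete_distinguished_triangle_morphism
        (Triangle.mk f₁ y y').rotate (Triangle.mk f₂ z z') hrot hT2 (𝟙 X₂) φ
        (by show y ≫ φ = 𝟙 X₂ ≫ f₂; rw [id_comp, hyφ])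
      change y' ≫ θ₀ = φ ≫ z at hθ₁
      replace hθ₂ : (-(f₁⟦(1:ℤ)⟧')) ≫ (𝟙 X₂)⟦(1:ℤ)⟧' = θ₀ ≫ z' := hθ₂
      rw [CategoryTheory.Functor.map_id, comp_id] at hθ₂
      exact ⟨θ₀, hθ₁, hθ₂.symm⟩
    obtain ⟨φ₀, hφ₀⟩ : ∃ φ₀ : Z ⟶ X₄, f₃ = z ≫ φ₀ :=
      Triangle.yoneda_exact₂ _ hT2 f₃ h₂
    obtain ⟨ψ₀, hψ₀⟩ : ∃ ψ₀ : X₂⟦(1:ℤ)⟧ ⟶ X₅, φ₀ ≫ f₄ = z' ≫ ψ₀ :=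
      Triangle.yoneda_exact₃ _ hT2 (φ₀ ≫ f₄) (by show z ≫ φ₀ ≫ f₄ = 0; rw [← assoc, ← hφ₀, h₃])
    obtain ⟨α, hα⟩ :
        ∃ α : X₂⟦(1:ℤ)⟧ ⟶ X₄, ψ - θ ≫ φ₀ = (-(f₁⟦(1:ℤ)⟧')) ≫ α :=
      Triangle.yoneda_exact₃ _ hrot (ψ - θ ≫ φ₀)
        (by show y' ≫ (ψ - θ ≫ φ₀) = 0; rw [Preadditive.comp_sub, hy'ψ, ← assoc, hθ₁', assoc, ← hφ₀, sub_self])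
    have hzz' : z ≫ z' = 0 := comp_distTriang_mor_zero₂₃ _ hT2
    refine ⟨ψ₀ + α ≫ f₄, ⟨Z, z, z', φ₀ + z' ≫ α, hT2, ?_, ?_⟩, ?_⟩
    · rw [Preadditive.comp_add, ← hφ₀, ← assoc, hzz', zero_comp, add_zero]
    · rw [Preadditive.comp_add, ← hψ₀, Preadditive.add_comp, assoc]
    · have hψ : ψ = θ ≫ φ₀ + (-(f₁⟦(1:ℤ)⟧')) ≫ α := by
        rw [← hα]; abel
      rw [hψ]
      simp only [Preadditive.add_comp, assoc, hψ₀]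
      rw [← assoc θ z' ψ₀, hθ₂']
      simp only [Preadditive.neg_comp, Preadditive.comp_add]
      abel
  · rintro ⟨ψ', ⟨Z, z, z', φ', hT2, hzφ', hz'ψ'⟩, rfl⟩
    obtain ⟨Y, y, y', hT⟩ := distinguished_cocone_triangle f₁
    obtain ⟨φ, hφ⟩ : ∃ φ : Y ⟶ X₃, f₂ = y ≫ φ :=
      Triangle.yoneda_exact₂ _ hT f₂ h₁
    have hrot := rot_of_distTriang _ hT
    obtain ⟨θ, hθ₁', hθ₂'⟩ :
        ∃ θ : X₁⟦(1:ℤ)⟧ ⟶ Z, y' ≫ θ = φ ≫ z ∧ θ ≫ z' = -(f₁⟦(1:ℤ)⟧') := by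
      obtain ⟨θ₀, hθ₁, hθ₂⟩ := complete_distinguished_triangle_morphism
        (Triangle.mk f₁ y y').rotate (Triangle.mk f₂ z z') hrot hT2 (𝟙 X₂) φ
        (by show y ≫ φ = 𝟙 X₂ ≫ f₂; rw [← hφ, id_comp])
      change y' ≫ θ₀ = φ ≫ z at hθ₁
      replace hθ₂ : (-(f₁⟦(1:ℤ)⟧')) ≫ (𝟙 X₂)⟦(1:ℤ)⟧' = θ₀ ≫ z' := hθ₂
      rw [CategoryTheory.Functor.map_id, comp_id] at hθ₂
      exact ⟨θ₀, hθ₁, hθ₂.symm⟩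
    refine ⟨θ ≫ φ', ⟨Y, y, y', φ, hT, hφ.symm, ?_⟩, ?_⟩
    · rw [← assoc, hθ₁', assoc, hzφ']
    · rw [assoc, ← hz'ψ', ← assoc, hθ₂', Preadditive.neg_comp]
end

section
/- Let C be a pretriangulated category with shift Σ. A candidate triangle X₁ →f₁→ X₂ →f₂→ X₃ →f₃→ ΣX₁ in C is a distinguished triangle if and only if both of the following hold: (1) the candidate triangle is Yoneda exact, i.e. for every object A of C the sequence of abelian groups Hom(A, X₁) → Hom(A, X₂) → Hom(A, X₃) → Hom(A, ΣX₁) → Hom(A, ΣX₂), with maps given by postcomposition with f₁, f₂, f₃ and Σf₁ respectively, is exact at the three middle spots; and (2) the identity morphism 1_{ΣX₁} belongs to the iterated cofiber Toda bracket ⟨f₃,f₂,f₁⟩cc ⊆ Hom(ΣX₁, ΣX₁). (This is the case n = 3 of the paper's Proposition 7.2, generalizing a theorem of Heller; the proof uses only the pretriangulated axioms.) -/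
open CategoryTheory Category Limits Pretriangulated

variable {C : Type*} [Category C] [Preadditive C] [HasZeroObject C]
  [HasShift C ℤ] [∀ n : ℤ, (CategoryTheory.shiftFunctor C n).Additive] [Pretriangulated C]

/-- Heller's criterion: a candidate triangle is distinguished iff it is Yoneda exact and
the iterated cofiber Toda bracket contains the identity. -/
theorem distinguished_iff_yonedaExact_and_id_mem_todaCC
    {X₁ X₂ X₃ : C} (f₁ : X₁ ⟶ X₂) (f₂ : X₂ ⟶ X₃) (f₃ : X₃ ⟶ X₁⟦(1:ℤ)⟧) :
    (Triangle.mk f₁ f₂ f₃ ∈ distTriang C) ↔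
      ((∀ (A : C) (g : A ⟶ X₂), g ≫ f₂ = 0 ↔ ∃ g' : A ⟶ X₁, g' ≫ f₁ = g) ∧
       (∀ (A : C) (g : A ⟶ X₃), g ≫ f₃ = 0 ↔ ∃ g' : A ⟶ X₂, g' ≫ f₂ = g) ∧
       (∀ (A : C) (g : A ⟶ X₁⟦(1:ℤ)⟧), g ≫ f₁⟦(1:ℤ)⟧' = 0 ↔ ∃ g' : A ⟶ X₃, g' ≫ f₃ = g)) ∧
      𝟙 (X₁⟦(1:ℤ)⟧) ∈ todaCC f₁ f₂ f₃ := by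
  constructor
  · intro hT
    refine ⟨⟨?_, ?_, ?_⟩, ?_⟩
    · intro A g
      constructor
      · intro hg
        obtain ⟨g', hg'⟩ := Triangle.coyoneda_exact₂ _ hT g hg
        exact ⟨g', hg'.symm⟩
      · rintro ⟨g', rfl⟩
        rw [assoc]
        exact (comp_distTriang_mor_zero₁₂ _ hT) ▸ comp_zero
    · intro A g
      constructor
      · intro hg
        obtain ⟨g', hg'⟩ := Triangle.coyoneda_exact₃ _ hT g hg
        exact ⟨g', hg'.symm⟩
      · rintro ⟨g', rfl⟩
        rw [assoc]
        exact (comp_distTriang_mor_zero₂₃ _ hT) ▸ comp_zero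
    · intro A g
      constructor
      · intro hg
        obtain ⟨g', hg'⟩ := Triangle.coyoneda_exact₁ _ hT g hg
        exact ⟨g', hg'.symm⟩
      · rintro ⟨g', rfl⟩
        rw [assoc]
        have := comp_distTriang_mor_zero₃₁ _ hT
        change f₃ ≫ f₁⟦(1:ℤ)⟧' = 0 at this
        rw [this, comp_zero]
    · exact ⟨X₃, f₂, f₃, 𝟙 _, hT, comp_id _, by simp⟩
  · rintro ⟨⟨h₁, h₂, h₃⟩, Y, y, y', φ, hd, hyφ, hy'⟩
    rw [comp_id] at hy'
    -- φ : Y ⟶ X₃ is an isomorphism by the five lemma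
    have : IsIso φ := by
      refine isIso_of_yoneda_map_bijective φ (fun A => ⟨?_, ?_⟩)
      · intro a b hab
        dsimp at hab
        suffices h : ∀ (h : A ⟶ Y), h ≫ φ = 0 → h = 0 by
          have := h (a - b) (by simp [Preadditive.sub_comp, hab])
          rwa [sub_eq_zero] at this
        intro h hh
        have hy'0 : h ≫ y' = 0 := by rw [hy', ← assoc, hh, zero_comp]
        obtain ⟨k, hk⟩ := Triangle.coyoneda_exact₃ _ hd h hy'0
        have hk2 : k ≫ f₂ = 0 := by
          rw [← hyφ]; refine (assoc k y φ).symm.trans ?_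
          change h = k ≫ y at hk
          rw [← hk, hh]
        obtain ⟨l, hl⟩ := (h₁ A k).1 hk2
        have hzero : (l ≫ f₁) ≫ y = 0 := by
          rw [assoc]
          have := comp_distTriang_mor_zero₁₂ _ hd
          change f₁ ≫ y = 0 at this
          rw [this, comp_zero]
        rw [hk, ← hl]
        exact hzero
      · intro g
        dsimp at g ⊢
        have hgf₃ : (g ≫ f₃) ≫ f₁⟦(1:ℤ)⟧' = 0 := (h₃ A (g ≫ f₃)).2 ⟨g, rfl⟩
        have hyy' : (g ≫ f₃) ≫ f₁⟦(1:ℤ)⟧' = 0 := hgf₃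
        obtain ⟨h, hh⟩ := Triangle.coyoneda_exact₁ _ hd (g ≫ f₃) hgf₃
        change A ⟶ Y at h
        change g ≫ f₃ = h ≫ y' at hh
        have hdiff : (h ≫ φ - g) ≫ f₃ = 0 := by
          rw [Preadditive.sub_comp, assoc, ← hy', ← hh, sub_self]
        obtain ⟨k, hk⟩ := (h₂ A _).1 hdiff
        refine ⟨h - k ≫ y, ?_⟩
        rw [Preadditive.sub_comp, assoc, hyφ, hk]
        abel
    -- transfer distinguishedness along the isomorphism
    refine isomorphic_distinguished _ hd _ ?_
    exact Triangle.isoMk _ _ (Iso.refl _) (Iso.refl _) (asIso φ).symm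
      (by exact (comp_id _).trans (id_comp _).symm)
      (by simp [← hyφ]; exact (assoc _ _ _).trans ((congrArg (fun t => y ≫ t) (IsIso.hom_inv_id φ)).trans ((comp_id y).trans (id_comp y).symm)))
      (by simp [hy']; exact (congrArg (fun t => f₃ ≫ t) ((shiftFunctor C (1:ℤ)).map_id _)).trans ((comp_id f₃).trans (IsIso.inv_hom_id_assoc φ f₃).symm))
end
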